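/- For independent ε₁,…,ε_c ~ N(0,σ²) and any unmatched-edge lower bound μ > 0 on standardized mean differences, the probability that a specific incorrect matching (containing at least one unmatched edge pair whose weight difference is N(μ'σ, 2σ²) with |μ'| ≥ μ) is excluded from the feasible set at threshold τ_c = Φ⁻¹(1−α/2)σ/√c is at least Φ((−Φ⁻¹(1−α/2) − μ√c)/√(2c)) + 1 − Φ((Φ⁻¹(1−α/2) − μ√c)/√(2c)). -/

import Mathlib

open scoped NNReal
open MeasureTheory ProbabilityTheory

/-- Standard normal cumulative distribution function. -/
noncomputable def stdNormalCDF (t : ℝ) : ℝ := ((gaussianReal 0 1) (Set.Iic t)).toReal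

lemma stdNormal_singleton (t : ℝ) : gaussianReal 0 1 {t} = 0 :=
  gaussianReal_absolutelyContinuous 0 one_ne_zero (measure_singleton t)

lemma stdNormal_Iio (t : ℝ) : ((gaussianReal 0 1) (Set.Iio t)).toReal = stdNormalCDF t := by
  unfold stdNormalCDF
  rw [← Set.Iio_union_right, measure_union (by simp) (measurableSet_singleton t),
    stdNormal_singleton, add_zero]

lemma stdNormal_Ioi (t : ℝ) : ((gaussianReal 0 1) (Set.Ioi t)).toReal = 1 - stdNormalCDF t := by
  have h := measure_add_measure_compl (μ := gaussianReal 0 1) (measurableSet_Iic (a := t))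
  rw [Set.compl_Iic, measure_univ] at h
  have h1 : (gaussianReal 0 1) (Set.Iic t) ≠ ⊤ := measure_ne_top _ _
  have h2 : (gaussianReal 0 1) (Set.Ioi t) ≠ ⊤ := measure_ne_top _ _
  have := congrArg ENNReal.toReal h
  rw [ENNReal.toReal_add h1 h2, ENNReal.toReal_one] at this
  unfold stdNormalCDF
  linarith

lemma stdNormal_neg_map :
    (gaussianReal 0 1).map (fun x => -x) = gaussianReal 0 1 := by
  have h := gaussianReal_map_const_mul (μ := 0) (v := 1) (-1)
  have : (fun x : ℝ => -x) = fun x : ℝ => (-1 : ℝ) * x := by funext x; ring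
  rw [this, h]
  norm_num

lemma stdNormalCDF_zero : stdNormalCDF 0 = 1 / 2 := by
  have hmap := stdNormal_neg_map
  have hIoi : (gaussianReal 0 1) (Set.Ioi (0:ℝ)) = (gaussianReal 0 1) (Set.Iic (0:ℝ)) := by
    conv_lhs => rw [← hmap]
    rw [Measure.map_apply measurable_neg measurableSet_Ioi]
    have : (fun x : ℝ => -x) ⁻¹' Set.Ioi 0 = Set.Iio 0 := by
      ext x; simp
    rw [this, ← Set.Iio_union_right, measure_union (by simp) (measurableSet_singleton 0),
      stdNormal_singleton, add_zero]
  have h := measure_add_measure_compl (μ := gaussianReal 0 1) (measurableSet_Iic (a := (0:ℝ)))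
  rw [Set.compl_Iic, hIoi, measure_univ] at h
  have h1 : (gaussianReal 0 1) (Set.Iic (0:ℝ)) ≠ ⊤ := measure_ne_top _ _
  have := congrArg ENNReal.toReal h
  rw [ENNReal.toReal_add h1 h1, ENNReal.toReal_one] at this
  unfold stdNormalCDF
  linarith

/-- For Z ~ N(μσ, 2σ²), the probability that |Z| exceeds the threshold
τ_c = Φ⁻¹(1−α/2)σ/√c (i.e. that the incorrect matching is excluded from the feasible
set) is at least Φ((−Φ⁻¹(1−α/2) − μ√c)/√(2c)) + 1 − Φ((Φ⁻¹(1−α/2) − μ√c)/√(2c)). -/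
theorem exclusion_prob_lower_bound
    {Ω : Type*} [MeasureSpace Ω] (P : Measure Ω) [IsProbabilityMeasure P]
    (σ : ℝ≥0) (hσ : 0 < σ) (μ : ℝ) (hμ : 0 < μ)
    (α : ℝ) (hα : α ∈ Set.Ioo (0 : ℝ) 1)
    (q : ℝ) (hq : stdNormalCDF q = 1 - α / 2)
    (c : ℕ) (hc : 0 < c)
    (Z : Ω → ℝ) (hZ : Measure.map Z P = gaussianReal (μ * σ) (2 * σ ^ 2)) :
    stdNormalCDF ((-q - μ * Real.sqrt c) / Real.sqrt (2 * c))
        + 1 - stdNormalCDF ((q - μ * Real.sqrt c) / Real.sqrt (2 * c))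
      ≤ (P {ω | q * σ / Real.sqrt c < |Z ω|}).toReal := by
  obtain ⟨hα0, hα1⟩ := hα
  have hσR : (0:ℝ) < σ := hσ
  have hcR : (0:ℝ) < c := Nat.cast_pos.mpr hc
  have hsc : (0:ℝ) < Real.sqrt c := Real.sqrt_pos.mpr hcR
  have hq0 : 0 < q := by
    by_contra h
    push_neg at h
    have hmono : stdNormalCDF q ≤ stdNormalCDF 0 :=
      ENNReal.toReal_mono (measure_ne_top _ _)
        (measure_mono (Set.Iic_subset_Iic.mpr h))
    rw [hq, stdNormalCDF_zero] at hmono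
    linarith
  set τ : ℝ := q * σ / Real.sqrt c with hτdef
  have hτ : 0 < τ := div_pos (mul_pos hq0 hσR) hsc
  set a : ℝ := σ * Real.sqrt 2 with hadef
  have hs2 : (0:ℝ) < Real.sqrt 2 := Real.sqrt_pos.mpr two_pos
  have ha : 0 < a := mul_pos hσR hs2
  set m : ℝ := μ * σ with hmdef
  have hmap : (gaussianReal 0 1).map (fun x => a * x + m)
      = gaussianReal m (2 * σ ^ 2) := by
    have hcomp : (fun x : ℝ => a * x + m) = (fun x => x + m) ∘ (fun x => a * x) := rfl
    rw [hcomp, ← Measure.map_map (measurable_add_const m) (measurable_const_mul a),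
      gaussianReal_map_const_mul, gaussianReal_map_add_const]
    norm_num
    congr 1
    ext
    push_cast
    rw [hadef, mul_pow, Real.sq_sqrt two_pos.le]
    ring
  have hZae : AEMeasurable Z P := by
    by_contra h
    rw [Measure.map_of_not_aemeasurable h] at hZ
    have h0 : (gaussianReal (μ * σ) (2 * σ ^ 2)) Set.univ = 0 := by rw [← hZ]; simp
    rw [measure_univ] at h0
    exact one_ne_zero h0
  have hSmeas : MeasurableSet (Set.Iio (-τ) ∪ Set.Ioi τ) :=
    measurableSet_Iio.union measurableSet_Ioi
  have hPS : P {ω | τ < |Z ω|}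
      = gaussianReal m (2 * σ ^ 2) (Set.Iio (-τ) ∪ Set.Ioi τ) := by
    have hset : {ω | τ < |Z ω|} = Z ⁻¹' (Set.Iio (-τ) ∪ Set.Ioi τ) := by
      ext ω
      simp only [Set.mem_setOf_eq, Set.mem_preimage, Set.mem_union, Set.mem_Iio, Set.mem_Ioi,
        lt_abs, lt_neg]
      tauto
    rw [hset, ← hZ, Measure.map_apply_of_aemeasurable hZae hSmeas]
  have hdisj : Disjoint (Set.Iio (-τ)) (Set.Ioi τ) := by
    rw [Set.disjoint_left]
    intro x hx hx'
    simp only [Set.mem_Iio, Set.mem_Ioi] at hx hx'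
    linarith
  have hIio : ∀ t : ℝ, gaussianReal m (2 * σ ^ 2) (Set.Iio t)
      = gaussianReal 0 1 (Set.Iio ((t - m) / a)) := by
    intro t
    rw [← hmap, Measure.map_apply (by fun_prop) measurableSet_Iio]
    congr 1
    ext x
    simp only [Set.mem_preimage, Set.mem_Iio]
    rw [lt_div_iff₀ ha, mul_comm]
    constructor <;> intro <;> linarith
  have hIoi : gaussianReal m (2 * σ ^ 2) (Set.Ioi τ)
      = gaussianReal 0 1 (Set.Ioi ((τ - m) / a)) := by
    rw [← hmap, Measure.map_apply (by fun_prop) measurableSet_Ioi]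
    congr 1
    ext x
    simp only [Set.mem_preimage, Set.mem_Ioi]
    rw [div_lt_iff₀ ha, mul_comm]
    constructor <;> intro <;> linarith
  have hss : Real.sqrt c * Real.sqrt c = c := Real.mul_self_sqrt hcR.le
  have hsqrt2c : Real.sqrt (2 * c) = Real.sqrt 2 * Real.sqrt c :=
    Real.sqrt_mul two_pos.le c
  have h1 : (-τ - m) / a = (-q - μ * Real.sqrt c) / Real.sqrt (2 * c) := by
    rw [hsqrt2c, hτdef, hadef, hmdef]
    field_simp
  have h2 : (τ - m) / a = (q - μ * Real.sqrt c) / Real.sqrt (2 * c) := by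
    rw [hsqrt2c, hτdef, hadef, hmdef]
    field_simp
  rw [hPS, measure_union hdisj measurableSet_Ioi, hIio, hIoi,
    ENNReal.toReal_add (measure_ne_top _ _) (measure_ne_top _ _),
    h1, h2, stdNormal_Iio, stdNormal_Ioi]
  linarith [le_refl (0:ℝ)]
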